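/- Let f ∈ O_{ℂ²,0} be a reduced analytic germ with f(0)=0 and let (S,0) ⊂ (ℂ³,0) be its stabilization, defined by f(x,y) − z² = 0. For analytic germs h₁, h₂ ∈ O_{ℂ²,0}, consider the germ H(x,y,z) = h₁(x,y) + z·h₂(x,y) on ℂ³. Then v(H) = min( v(h₁), v(z·h₂) ), where v denotes the minimal order along arcs on (S,0), h₁ is regarded as the germ (x,y,z) ↦ h₁(x,y), and z·h₂ as the germ (x,y,z) ↦ z·h₂(x,y). -/

import Mathlib

open Filter
open scoped Classical

/-- An arc on the hypersurface `{f = 0} ⊆ ℂ^N`: a germ of an analytic map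
`φ : (ℂ,0) → (ℂ^N,0)` with `f ∘ φ ≡ 0` near `0`. -/
structure Arc (N : ℕ) (f : (Fin N → ℂ) → ℂ) where
  toFun : ℂ → Fin N → ℂ
  analyticAt : AnalyticAt ℂ toFun 0
  map_zero : toFun 0 = 0
  vanish : ∀ᶠ τ in nhds 0, f (toFun τ) = 0

/-- The order of vanishing at `0` of a germ `ℂ → ℂ`: the exponent of the first
nonvanishing Taylor term, `⊤` for the zero germ (junk value `0` if not analytic). -/
noncomputable def ord (h : ℂ → ℂ) : ℕ∞ :=
  if hh : AnalyticAt ℂ h 0 then analyticOrderAt h 0 else 0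

/-- `v(g)`: the minimal order of vanishing of `g` along arcs on `{f = 0} ⊆ ℂ^N`. -/
noncomputable def vArc (N : ℕ) (f g : (Fin N → ℂ) → ℂ) : ℕ∞ :=
  ⨅ ψ : Arc N f, ord (g ∘ ψ.toFun)

/-- The `i`-th piece `F_i` of the arc filtration: analytic germs `g` with `v(g) ≥ i`. -/
def arcFiltration (N : ℕ) (f : (Fin N → ℂ) → ℂ) (i : ℕ) :
    Set ((Fin N → ℂ) → ℂ) :=
  {g | AnalyticAt ℂ g 0 ∧ (i : ℕ∞) ≤ vArc N f g}

/-- `dimQuotEq F i d` says that `dim_ℂ (F i / F (i+1)) = d`: there are `d` elements of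
`F i` such that every element of `F i` has a unique expression as a linear combination
of them modulo `F (i+1)`. -/
def dimQuotEq {M : Type*} [AddCommGroup M] [Module ℂ M]
    (F : ℕ → Set M) (i d : ℕ) : Prop :=
  ∃ b : Fin d → M, (∀ k, b k ∈ F i) ∧
    ∀ g ∈ F i, ∃! c : Fin d → ℂ, g - ∑ k, c k • b k ∈ F (i + 1)

/-- The stabilization `{f(x,y) - z² = 0} ⊆ ℂ³` of the plane curve `{f = 0}`. -/
def stab (f : (Fin 2 → ℂ) → ℂ) : (Fin 3 → ℂ) → ℂ :=
  fun w => f ![w 0, w 1] - w 2 ^ 2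

/-- A reduced (squarefree) analytic germ at `0`: no square of a nonunit divides it. -/
def SquarefreeGerm {N : ℕ} (f : (Fin N → ℂ) → ℂ) : Prop :=
  ∀ u : (Fin N → ℂ) → ℂ, AnalyticAt ℂ u 0 → u 0 = 0 →
    ¬ ∃ w : (Fin N → ℂ) → ℂ, AnalyticAt ℂ w 0 ∧
      ∀ᶠ x in nhds 0, f x = u x * u x * w x

/-! ### Auxiliary lemmas -/

private lemma enat_le_of_forall_nat {a b : ℕ∞}
    (h : ∀ n : ℕ, (n : ℕ∞) ≤ a → (n : ℕ∞) ≤ b) : a ≤ b := by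
  cases b with
  | top => exact le_top
  | coe m =>
    cases a with
    | top =>
      have := h (m + 1) le_top
      exact absurd this (by exact_mod_cast Nat.not_succ_le_self m)
    | coe n => exact h n le_rfl

private lemma le_ord_iff {g : ℂ → ℂ} (hg : AnalyticAt ℂ g 0) (n : ℕ) :
    (n : ℕ∞) ≤ ord g ↔
      ∃ h : ℂ → ℂ, AnalyticAt ℂ h 0 ∧ ∀ᶠ z in nhds 0, g z = z ^ n * h z := by
  rw [ord, dif_pos hg]
  constructor
  · intro hn
    cases ho : analyticOrderAt g 0 with
    | top =>
      refine ⟨0, analyticAt_const, ?_⟩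
      filter_upwards [analyticOrderAt_eq_top.mp ho] with z hz
      simp [hz]
    | coe m =>
      rw [ho] at hn
      have hm : n ≤ m := by exact_mod_cast hn
      obtain ⟨u, hu, hu0, hgu⟩ := (hg.analyticOrderAt_eq_natCast (n := m)).mp ho
      refine ⟨fun z => z ^ (m - n) * u z, (analyticAt_id.pow _).mul hu, ?_⟩
      filter_upwards [hgu] with z hz
      rw [hz, smul_eq_mul, sub_zero, ← mul_assoc, ← pow_add, Nat.add_sub_cancel' hm]
  · rintro ⟨h, hh, hgh⟩
    by_contra hcon
    push_neg at hcon
    cases ho : analyticOrderAt g 0 with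
    | top => rw [ho] at hcon; exact absurd hcon (by simp)
    | coe m =>
      rw [ho] at hcon
      have hm : m < n := by exact_mod_cast hcon
      obtain ⟨u, hu, hu0, hgu⟩ := (hg.analyticOrderAt_eq_natCast (n := m)).mp ho
      apply hu0
      have he : ∀ᶠ z in nhdsWithin (0:ℂ) {(0:ℂ)}ᶜ, u z = z ^ (n - m) * h z := by
        filter_upwards [eventually_nhdsWithin_of_eventually_nhds (hgu.and hgh),
          self_mem_nhdsWithin] with z hz hz0
        have hz0' : (z : ℂ) ≠ 0 := hz0
        have h1 : z ^ m * u z = z ^ m * (z ^ (n - m) * h z) := by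
          rw [← mul_assoc, ← pow_add, Nat.add_sub_cancel' hm.le, ← hz.2, hz.1, smul_eq_mul,
            sub_zero]
        exact mul_left_cancel₀ (pow_ne_zero m hz0') h1
      have h1 : Tendsto u (nhdsWithin (0:ℂ) {(0:ℂ)}ᶜ)
          (nhds (u 0)) := hu.continuousAt.continuousWithinAt.tendsto
      have h2 : Tendsto (fun z : ℂ => z ^ (n - m) * h z) (nhdsWithin (0:ℂ) {(0:ℂ)}ᶜ)
          (nhds ((0:ℂ) ^ (n - m) * h 0)) :=
        ((continuousAt_pow _ _).mul hh.continuousAt).continuousWithinAt.tendsto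
      have := tendsto_nhds_unique (h1.congr' he) h2
      rw [this, zero_pow (Nat.sub_ne_zero_of_lt hm), zero_mul]

private lemma min_ord_le {g₁ g₂ g : ℂ → ℂ} (h1 : AnalyticAt ℂ g₁ 0) (h2 : AnalyticAt ℂ g₂ 0)
    (hg : AnalyticAt ℂ g 0) (c₁ c₂ : ℂ) (hgeq : ∀ z, g z = c₁ * g₁ z + c₂ * g₂ z) :
    min (ord g₁) (ord g₂) ≤ ord g := by
  apply enat_le_of_forall_nat
  intro n hn
  obtain ⟨a, ha, hga⟩ := (le_ord_iff h1 n).mp (hn.trans (min_le_left _ _))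
  obtain ⟨b, hb, hgb⟩ := (le_ord_iff h2 n).mp (hn.trans (min_le_right _ _))
  refine (le_ord_iff hg n).mpr ⟨fun z => c₁ * a z + c₂ * b z,
    (analyticAt_const.mul ha).add (analyticAt_const.mul hb), ?_⟩
  filter_upwards [hga, hgb] with z hza hzb
  rw [hgeq, hza, hzb]; ring

private lemma proj_analytic {N : ℕ} {f : (Fin N → ℂ) → ℂ} (ψ : Arc N f) (i : Fin N) :
    AnalyticAt ℂ (fun τ => ψ.toFun τ i) 0 :=
  ((ContinuousLinearMap.proj i : (Fin N → ℂ) →L[ℂ] ℂ).analyticAt _).comp ψ.analyticAt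

private lemma pm_analytic {f : (Fin 3 → ℂ) → ℂ} (ψ : Arc 3 f) :
    AnalyticAt ℂ (fun τ => (![ψ.toFun τ 0, ψ.toFun τ 1] : Fin 2 → ℂ)) 0 := by
  have key : AnalyticAt ℂ (fun τ i =>
      (![fun τ => ψ.toFun τ 0, fun τ => ψ.toFun τ 1] : Fin 2 → ℂ → ℂ) i τ) 0 := by
    apply AnalyticAt.pi
    intro i
    fin_cases i
    · exact proj_analytic ψ 0
    · exact proj_analytic ψ 1
  have : (fun τ i => (![fun τ => ψ.toFun τ 0, fun τ => ψ.toFun τ 1] : Fin 2 → ℂ → ℂ) i τ)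
      = (fun τ => (![ψ.toFun τ 0, ψ.toFun τ 1] : Fin 2 → ℂ)) := by
    funext τ i; fin_cases i <;> rfl
  rwa [this] at key

private lemma pm_zero {f : (Fin 3 → ℂ) → ℂ} (ψ : Arc 3 f) :
    (![ψ.toFun 0 0, ψ.toFun 0 1] : Fin 2 → ℂ) = 0 := by
  rw [ψ.map_zero]; funext i; fin_cases i <;> rfl

private lemma comp_analytic {f : (Fin 3 → ℂ) → ℂ} (ψ : Arc 3 f)
    {h : (Fin 2 → ℂ) → ℂ} (hh : AnalyticAt ℂ h 0) :
    AnalyticAt ℂ (fun τ => h ![ψ.toFun τ 0, ψ.toFun τ 1]) 0 := by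
  have hh' : AnalyticAt ℂ h (![ψ.toFun 0 0, ψ.toFun 0 1] : Fin 2 → ℂ) := by
    rw [pm_zero]; exact hh
  exact AnalyticAt.comp (g := h)
    (f := fun τ => (![ψ.toFun τ 0, ψ.toFun τ 1] : Fin 2 → ℂ)) hh' (pm_analytic ψ)

/-- The arc obtained from `ψ` by negating the third coordinate; it still lies on the
stabilization since `z` appears there only through `z²`. -/
private noncomputable def negArc {f : (Fin 2 → ℂ) → ℂ} (ψ : Arc 3 (stab f)) :
    Arc 3 (stab f) where
  toFun τ := ![ψ.toFun τ 0, ψ.toFun τ 1, -ψ.toFun τ 2]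
  analyticAt := by
    have key : AnalyticAt ℂ (fun τ i =>
        (![fun τ => ψ.toFun τ 0, fun τ => ψ.toFun τ 1, fun τ => -ψ.toFun τ 2]
          : Fin 3 → ℂ → ℂ) i τ) 0 := by
      apply AnalyticAt.pi
      intro i
      fin_cases i
      · exact proj_analytic ψ 0
      · exact proj_analytic ψ 1
      · exact (proj_analytic ψ 2).neg
    have : (fun τ i =>
        (![fun τ => ψ.toFun τ 0, fun τ => ψ.toFun τ 1, fun τ => -ψ.toFun τ 2]
          : Fin 3 → ℂ → ℂ) i τ)
        = (fun τ => (![ψ.toFun τ 0, ψ.toFun τ 1, -ψ.toFun τ 2] : Fin 3 → ℂ)) := by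
      funext τ i; fin_cases i <;> rfl
    rwa [this] at key
  map_zero := by
    show (![ψ.toFun 0 0, ψ.toFun 0 1, -ψ.toFun 0 2] : Fin 3 → ℂ) = 0
    rw [ψ.map_zero]; funext i; fin_cases i <;> simp
  vanish := by
    filter_upwards [ψ.vanish] with τ hτ
    simp only [stab] at hτ ⊢
    simpa using hτ

private lemma negArc_toFun {f : (Fin 2 → ℂ) → ℂ} (ψ : Arc 3 (stab f)) (τ : ℂ) :
    (negArc ψ).toFun τ = ![ψ.toFun τ 0, ψ.toFun τ 1, -ψ.toFun τ 2] := rfl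

/-- Let `(S,0) ⊆ (ℂ³,0)` be the stabilization `{f(x,y) - z² = 0}`
of a reduced plane curve germ `{f = 0}`. For analytic germs `h₁, h₂` on `(ℂ²,0)` and
`H = h₁ + z·h₂` one has `v(H) = min(v(h₁), v(z·h₂))`, where `v` is the minimal order
along arcs on `(S,0)`. -/
theorem v_stabilization_eq_min
    (f : (Fin 2 → ℂ) → ℂ) (hf : AnalyticAt ℂ f 0) (hf0 : f 0 = 0)
    (hred : SquarefreeGerm f)
    (h₁ h₂ : (Fin 2 → ℂ) → ℂ)
    (hh₁ : AnalyticAt ℂ h₁ 0) (hh₂ : AnalyticAt ℂ h₂ 0) :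
    vArc 3 (stab f) (fun w => h₁ ![w 0, w 1] + w 2 * h₂ ![w 0, w 1])
      = min (vArc 3 (stab f) (fun w => h₁ ![w 0, w 1]))
            (vArc 3 (stab f) (fun w => w 2 * h₂ ![w 0, w 1])) := by
  have hH : ∀ ψ : Arc 3 (stab f),
      AnalyticAt ℂ ((fun w => h₁ ![w 0, w 1] + w 2 * h₂ ![w 0, w 1]) ∘ ψ.toFun) 0 :=
    fun ψ => (comp_analytic ψ hh₁).add ((proj_analytic ψ 2).mul (comp_analytic ψ hh₂))
  have hG₁ : ∀ ψ : Arc 3 (stab f),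
      AnalyticAt ℂ ((fun w => h₁ ![w 0, w 1]) ∘ ψ.toFun) 0 :=
    fun ψ => comp_analytic ψ hh₁
  have hG₂ : ∀ ψ : Arc 3 (stab f),
      AnalyticAt ℂ ((fun w => w 2 * h₂ ![w 0, w 1]) ∘ ψ.toFun) 0 :=
    fun ψ => (proj_analytic ψ 2).mul (comp_analytic ψ hh₂)
  refine le_antisymm ?_ ?_
  · refine le_min ?_ ?_
    · refine le_iInf fun ψ => ?_
      refine le_trans (le_min (iInf_le _ ψ) (iInf_le _ (negArc ψ))) ?_
      refine min_ord_le (hH ψ) (hH (negArc ψ)) (hG₁ ψ) (1/2) (1/2) fun τ => ?_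
      simp only [Function.comp_apply, negArc_toFun]
      simp only [Matrix.cons_val_zero, Matrix.cons_val_one, Matrix.head_cons,
        Matrix.cons_val_two, Matrix.tail_cons]
      ring
    · refine le_iInf fun ψ => ?_
      refine le_trans (le_min (iInf_le _ ψ) (iInf_le _ (negArc ψ))) ?_
      refine min_ord_le (hH ψ) (hH (negArc ψ)) (hG₂ ψ) (1/2) (-(1/2)) fun τ => ?_
      simp only [Function.comp_apply, negArc_toFun]
      simp only [Matrix.cons_val_zero, Matrix.cons_val_one, Matrix.head_cons,
        Matrix.cons_val_two, Matrix.tail_cons]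
      ring
  · refine le_iInf fun ψ => ?_
    refine le_trans (min_le_min (iInf_le _ ψ) (iInf_le _ ψ)) ?_
    refine min_ord_le (hG₁ ψ) (hG₂ ψ) (hH ψ) 1 1 fun τ => ?_
    simp only [Function.comp_apply]
    ring
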